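/- Let k ≥ 2 be an integer and let G = BS(1,k) = ℤ[1/k] ⋊_φ ℤ. Then for every finite subset A of G there exists g ∈ G such that the elements of g·A lie in pairwise distinct conjugacy classes of G; that is, c(g·A) = |A|. -/

import Mathlib

noncomputable section

/-- `ℤ[1/k]`: the additive subgroup `{a/kⁱ : a ∈ ℤ, i ∈ ℕ}` of `ℚ`. -/
def zOneOver (k : ℕ) : AddSubgroup ℚ :=
  AddSubgroup.closure {x : ℚ | ∃ (a : ℤ) (i : ℕ), x = (a : ℚ) / (k : ℚ) ^ i}

lemma intCast_mem_zOneOver (k : ℕ) (a : ℤ) : (a : ℚ) ∈ zOneOver k :=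
  AddSubgroup.subset_closure ⟨a, 0, by simp⟩

/-- Multiplication by `k` as an additive automorphism of `ℚ`. -/
def mulQ (k : ℕ) (hk : 2 ≤ k) : AddAut ℚ where
  toFun x := (k : ℚ) * x
  invFun x := ((k : ℚ))⁻¹ * x
  left_inv x := by
    have hk0 : (k : ℚ) ≠ 0 := by
      have : 0 < k := by omega
      exact_mod_cast this.ne'
    field_simp
  right_inv x := by
    have hk0 : (k : ℚ) ≠ 0 := by
      have : 0 < k := by omega
      exact_mod_cast this.ne'
    field_simp
  map_add' x y := by ring

/-- The action of the generator `t` of `ℤ` on `ℚ` (written multiplicatively). -/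
def bsAut (k : ℕ) (hk : 2 ≤ k) : MulAut (Multiplicative ℚ) :=
  AddEquiv.toMultiplicative (mulQ k hk)

lemma bsAut_apply (k : ℕ) (hk : 2 ≤ k) (y : Multiplicative ℚ) :
    Multiplicative.toAdd (bsAut k hk y) = (k : ℚ) * Multiplicative.toAdd y := rfl

lemma bsAut_inv_apply (k : ℕ) (hk : 2 ≤ k) (y : Multiplicative ℚ) :
    Multiplicative.toAdd ((bsAut k hk)⁻¹ y) = ((k : ℚ))⁻¹ * Multiplicative.toAdd y := rfl

lemma bsAut_zpow (k : ℕ) (hk : 2 ≤ k) (n : ℤ) :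
    ∀ y : Multiplicative ℚ,
      Multiplicative.toAdd ((bsAut k hk ^ n) y) = (k : ℚ) ^ n * Multiplicative.toAdd y := by
  have hk0 : (k : ℚ) ≠ 0 := by
    have : 0 < k := by omega
    exact_mod_cast this.ne'
  induction n using Int.induction_on with
  | zero => intro y; simp
  | succ m ih =>
      intro y
      rw [zpow_add_one, MulAut.mul_apply, ih, bsAut_apply, zpow_add_one₀ hk0]
      ring
  | pred m ih =>
      intro y
      rw [zpow_sub_one, MulAut.mul_apply, ih, bsAut_inv_apply, zpow_sub_one₀ hk0]
      ring

lemma zOneOver_smul (k : ℕ) (hk : 2 ≤ k) (n : ℤ) {x : ℚ} (hx : x ∈ zOneOver k) :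
    (k : ℚ) ^ n * x ∈ zOneOver k := by
  have hk0 : (k : ℚ) ≠ 0 := by
    have : 0 < k := by omega
    exact_mod_cast this.ne'
  induction hx using AddSubgroup.closure_induction with
  | mem x hx =>
      obtain ⟨a, i, rfl⟩ := hx
      apply AddSubgroup.subset_closure
      rcases le_or_gt (i : ℤ) n with h | h
      · refine ⟨a * k ^ (n - i).toNat, 0, ?_⟩
        have h1 : ((n - i).toNat : ℤ) = n - i := Int.toNat_of_nonneg (by omega)
        push_cast
        rw [← zpow_natCast (k : ℚ) (n - i).toNat]
        rw [h1]
        rw [zpow_sub₀ hk0]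
        field_simp
        rw [zpow_natCast]
      · refine ⟨a, (i - n).toNat, ?_⟩
        have h1 : (((i : ℤ) - n).toNat : ℤ) = (i : ℤ) - n := Int.toNat_of_nonneg (by omega)
        rw [← zpow_natCast (k : ℚ) i, ← zpow_natCast (k : ℚ) ((i : ℤ) - n).toNat, h1,
          zpow_sub₀ hk0]
        field_simp
  | zero => simpa using (zOneOver k).zero_mem
  | add x y hx hy ihx ihy =>
      rw [mul_add]
      exact add_mem ihx ihy
  | neg x hx ihx =>
      rw [mul_neg]
      exact neg_mem ihx

/-- The ambient group `ℚ ⋊_φ ℤ`, in which `BS(1,k) = ℤ[1/k] ⋊_φ ℤ` sits. -/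
abbrev BSAmbient (k : ℕ) (hk : 2 ≤ k) :=
  Multiplicative ℚ ⋊[zpowersHom (MulAut (Multiplicative ℚ)) (bsAut k hk)] Multiplicative ℤ

/-- The Baumslag–Solitar group `BS(1,k) = ℤ[1/k] ⋊_φ ℤ`, realised as the subgroup of
`ℚ ⋊_φ ℤ` of elements whose first coordinate lies in `ℤ[1/k]`. -/
def BS (k : ℕ) (hk : 2 ≤ k) : Subgroup (BSAmbient k hk) where
  carrier := {g | Multiplicative.toAdd g.left ∈ zOneOver k}
  one_mem' := by
    simpa using (zOneOver k).zero_mem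
  mul_mem' := by
    intro a b ha hb
    simp only [Set.mem_setOf_eq, SemidirectProduct.mul_left, toAdd_mul] at *
    refine add_mem ha ?_
    rw [zpowersHom_apply, bsAut_zpow]
    exact zOneOver_smul k hk _ hb
  inv_mem' := by
    intro a ha
    simp only [Set.mem_setOf_eq, SemidirectProduct.inv_left, zpowersHom_apply, toAdd_inv] at *
    rw [bsAut_zpow, toAdd_inv, mul_neg]
    exact neg_mem (zOneOver_smul k hk _ ha)

/-- The element `(x, tⁿ)` of `BS(1,k)`, for `x ∈ ℤ[1/k]` and `n ∈ ℤ`. -/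
def bsElem (k : ℕ) (hk : 2 ≤ k) (x : ℚ) (hx : x ∈ zOneOver k) (n : ℤ) : ↥(BS k hk) :=
  ⟨⟨Multiplicative.ofAdd x, Multiplicative.ofAdd n⟩, hx⟩


lemma zOneOver_exists {k : ℕ} (hk : 2 ≤ k) {x : ℚ} (hx : x ∈ zOneOver k) :
    ∃ (a : ℤ) (i : ℕ), x = (a : ℚ) / (k : ℚ) ^ i := by
  have hk0 : (k : ℚ) ≠ 0 := by
    have : 0 < k := by omega
    exact_mod_cast this.ne'
  induction hx using AddSubgroup.closure_induction with
  | mem x hx => exact hx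
  | zero => exact ⟨0, 0, by simp⟩
  | add x y hx hy ihx ihy =>
      obtain ⟨a, i, rfl⟩ := ihx
      obtain ⟨b, j, rfl⟩ := ihy
      refine ⟨a * k ^ j + b * k ^ i, i + j, ?_⟩
      rw [div_add_div _ _ (pow_ne_zero i hk0) (pow_ne_zero j hk0), pow_add]
      push_cast
      ring_nf
  | neg x hx ihx =>
      obtain ⟨a, i, rfl⟩ := ihx
      exact ⟨-a, i, by push_cast; ring⟩

namespace BSproof

variable (k : ℕ) (hk : 2 ≤ k)

/-- first coordinate -/
def bsX (a : ↥(BS k hk)) : ℚ := Multiplicative.toAdd (a.val.left)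
/-- second coordinate -/
def bsN (a : ↥(BS k hk)) : ℤ := Multiplicative.toAdd (a.val.right)

lemma bsX_mem (a : ↥(BS k hk)) : bsX k hk a ∈ zOneOver k := a.property

lemma bs_ext (a b : ↥(BS k hk)) (h1 : bsX k hk a = bsX k hk b)
    (h2 : bsN k hk a = bsN k hk b) : a = b := by
  apply Subtype.ext
  apply SemidirectProduct.ext
  · exact h1
  · exact h2

lemma bsX_mul (a b : ↥(BS k hk)) :
    bsX k hk (a * b) = bsX k hk a + (k : ℚ) ^ (bsN k hk a) * bsX k hk b := by
  show Multiplicative.toAdd ((a.val * b.val).left) = _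
  rw [SemidirectProduct.mul_left, toAdd_mul, zpowersHom_apply, bsAut_zpow]
  rfl

lemma bsN_mul (a b : ↥(BS k hk)) : bsN k hk (a * b) = bsN k hk a + bsN k hk b := by
  show Multiplicative.toAdd ((a.val * b.val).right) = _
  rw [SemidirectProduct.mul_right, toAdd_mul]
  rfl

lemma bsX_inv (a : ↥(BS k hk)) :
    bsX k hk a⁻¹ = -((k : ℚ) ^ (-(bsN k hk a)) * bsX k hk a) := by
  show Multiplicative.toAdd ((a.val)⁻¹.left) = _
  rw [SemidirectProduct.inv_left, zpowersHom_apply, bsAut_zpow]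
  simp only [toAdd_inv, bsN, bsX]
  ring

lemma bsN_inv (a : ↥(BS k hk)) : bsN k hk a⁻¹ = -bsN k hk a := by
  show Multiplicative.toAdd ((a.val)⁻¹.right) = _
  rw [SemidirectProduct.inv_right, toAdd_inv]
  rfl

lemma bsX_bsElem (x : ℚ) (hx : x ∈ zOneOver k) (n : ℤ) :
    bsX k hk (bsElem k hk x hx n) = x := rfl

lemma bsN_bsElem (x : ℚ) (hx : x ∈ zOneOver k) (n : ℤ) :
    bsN k hk (bsElem k hk x hx n) = n := rfl

/-- KEY1: conjugation data. -/
lemma conj_data {a b : ↥(BS k hk)} (h : IsConj a b) :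
    bsN k hk a = bsN k hk b ∧
    ∃ (m : ℤ) (y : ℚ), y ∈ zOneOver k ∧
      bsX k hk b = (k : ℚ) ^ m * bsX k hk a + (1 - (k : ℚ) ^ (bsN k hk a)) * y := by
  have hk0 : (k : ℚ) ≠ 0 := by
    have : 0 < k := by omega
    exact_mod_cast (by omega : 0 < k).ne'
  rw [isConj_iff] at h
  obtain ⟨c, rfl⟩ := h
  constructor
  · rw [bsN_mul, bsN_mul, bsN_inv]; ring
  · refine ⟨bsN k hk c, bsX k hk c, bsX_mem k hk c, ?_⟩
    rw [bsX_mul, bsX_mul, bsX_inv, bsN_mul, mul_neg, ← mul_assoc, ← zpow_add₀ hk0]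
    have e : bsN k hk c + bsN k hk a + -bsN k hk c = bsN k hk a := by ring
    rw [e]
    ring


include hk
lemma reduce_mod (q : ℕ) (hq : q.Prime) (hkq : ¬ q ∣ k)
    (u v : ℤ) (m : ℤ) (y : ℚ) (hy : y ∈ zOneOver k)
    (h : (u : ℚ) = (k : ℚ) ^ m * v + q * y) :
    ∃ m' : ℕ, m' < orderOf ((k : ZMod q)) ∧ (u : ZMod q) = (k : ZMod q) ^ m' * v := by
  haveI : Fact q.Prime := ⟨hq⟩
  have hkpos : 0 < k := lt_of_lt_of_le two_pos hk
  have hk0 : (k : ℚ) ≠ 0 := by exact_mod_cast hkpos.ne'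
  obtain ⟨b, s, rfl⟩ := zOneOver_exists hk hy
  set t : ℕ := s + m.natAbs with ht
  have hts : s ≤ t := Nat.le_add_right _ _
  have htm : 0 ≤ (t : ℤ) + m := by
    rcases Int.natAbs_eq m with h1 | h1 <;> omega
  set e : ℕ := ((t : ℤ) + m).toNat with he'
  have he : (e : ℤ) = (t : ℤ) + m := Int.toNat_of_nonneg htm
  have hQ : ((k : ℚ))^t * u = (k : ℚ)^e * v + q * (b * (k : ℚ)^(t-s)) := by
    rw [h, mul_add]
    congr 1
    · rw [← mul_assoc]
      congr 1
      rw [← zpow_natCast (k : ℚ) t, ← zpow_natCast (k : ℚ) e, ← zpow_add₀ hk0, he]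
    · rw [show t = s + (t - s) from (Nat.add_sub_cancel' hts).symm, pow_add, Nat.add_sub_cancel_left]
      field_simp
      rw [Nat.add_sub_cancel_left]
      ring
  have hZ : (k : ℤ)^t * u = (k : ℤ)^e * v + (q : ℤ) * (b * (k : ℤ)^(t-s)) := by
    exact_mod_cast hQ
  have hcast : (k : ZMod q)^t * (u : ZMod q) = (k : ZMod q)^e * (v : ZMod q) := by
    have := congrArg (fun z : ℤ => (z : ZMod q)) hZ
    push_cast at this
    simpa [ZMod.natCast_self] using this
  have hκ0 : (k : ZMod q) ≠ 0 := by
    rw [Ne, ZMod.natCast_eq_zero_iff]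
    exact hkq
  have hκ : IsUnit ((k : ℕ) : ZMod q) := isUnit_iff_ne_zero.mpr hκ0
  set w : (ZMod q)ˣ := hκ.unit with hwdef
  have hw : (w : ZMod q) = (k : ZMod q) := hκ.unit_spec
  have hord : orderOf ((k : ZMod q)) = orderOf w := by rw [← hw, orderOf_units]
  have hrpos : 0 < orderOf w := orderOf_pos w
  set d : ℤ := (e : ℤ) - t with hd
  set m' : ℕ := (d % (orderOf w : ℤ)).toNat with hm'def
  have hmodnn : 0 ≤ d % (orderOf w : ℤ) :=
    Int.emod_nonneg d (by exact_mod_cast hrpos.ne')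
  have hmodlt : d % (orderOf w : ℤ) < orderOf w :=
    Int.emod_lt_of_pos d (by exact_mod_cast hrpos)
  refine ⟨m', ?_, ?_⟩
  · rw [hord]; omega
  · have hwm : w ^ m' = (w ^ t)⁻¹ * w ^ e := by
      have : w ^ m' = w ^ d := by
        rw [hm'def, ← zpow_natCast, Int.toNat_of_nonneg hmodnn, zpow_mod_orderOf]
      rw [this, hd, zpow_sub, zpow_natCast, zpow_natCast]
      exact mul_comm _ _
    have hvp : ∀ n : ℕ, ((w ^ n : (ZMod q)ˣ) : ZMod q) = (k : ZMod q)^n := by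
      intro n; rw [← hw]; push_cast; ring
    have hcomb : w ^ t * w ^ m' = w ^ e := by
      rw [hwm, ← mul_assoc, mul_inv_cancel, one_mul]
    apply mul_left_cancel₀ (pow_ne_zero t hκ0)
    rw [hcast, ← hvp t, ← hvp e, ← hvp m', ← mul_assoc, ← Units.val_mul, hcomb]

omit hk

lemma good_residue (q : ℕ) (hq : q.Prime) (κ : ZMod q) (hr : orderOf κ < q)
    (μ α β : ZMod q) (hμ : μ ≠ 0) (hαβ : α ≠ β) :
    ∃ zb : ZMod q, ∀ m' : ℕ, m' < orderOf κ → zb * μ + β ≠ κ ^ m' * (zb * μ + α) := by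
  haveI : Fact q.Prime := ⟨hq⟩
  set r := orderOf κ with hrdef
  set bads : Finset (ZMod q) :=
    (Finset.range r).image (fun m' => (β - κ^m' * α) * ((κ^m' - 1) * μ)⁻¹) with hbads
  obtain ⟨zb, hzb⟩ : ∃ zb, zb ∉ bads := by
    by_contra hcon
    push_neg at hcon
    have hsub : (Finset.univ : Finset (ZMod q)) ⊆ bads := fun x _ => hcon x
    have h1 := Finset.card_le_card hsub
    have h2 : bads.card ≤ r := Finset.card_image_le.trans (by simp)
    rw [Finset.card_univ, ZMod.card] at h1
    omega
  refine ⟨zb, ?_⟩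
  intro m' hm' heq
  rcases Nat.eq_zero_or_pos m' with h0 | hpos
  · subst h0
    rw [pow_zero, one_mul] at heq
    exact hαβ (add_left_cancel heq).symm
  · have hne1 : κ ^ m' ≠ 1 := pow_ne_one_of_lt_orderOf hpos.ne' hm'
    have hco : (κ^m' - 1) * μ ≠ 0 := mul_ne_zero (sub_ne_zero.mpr hne1) hμ
    apply hzb
    refine Finset.mem_image.mpr ⟨m', Finset.mem_range.mpr hm', ?_⟩
    rw [mul_inv_eq_iff_eq_mul₀ hco]
    linear_combination heq

/-- CRT for distinct primes. -/
lemma crt_primes {ι : Type*} (s : Finset ι) (a : ι → ℕ) (ha : ∀ i ∈ s, (a i).Prime)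
    (hinj : ∀ i ∈ s, ∀ j ∈ s, a i = a j → i = j) (b : (i : ι) → ZMod (a i)) :
    ∃ z : ℤ, ∀ i ∈ s, (z : ZMod (a i)) = b i := by
  classical
  induction s using Finset.induction_on with
  | empty => exact ⟨0, by simp⟩
  | @insert j s hj ih =>
      obtain ⟨z, hz⟩ := ih (fun i hi => ha i (Finset.mem_insert_of_mem hi))
        (fun i hi i' hi' h => hinj i (Finset.mem_insert_of_mem hi) i'
          (Finset.mem_insert_of_mem hi') h)
      haveI : Fact (a j).Prime := ⟨ha j (Finset.mem_insert_self _ _)⟩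
      set P : ℕ := ∏ i ∈ s, a i with hP
      have hPne : ((P : ℕ) : ZMod (a j)) ≠ 0 := by
        rw [Ne, ZMod.natCast_eq_zero_iff]
        intro hdvd
        obtain ⟨i, hi, hdvd2⟩ := (Nat.Prime.prime (ha j (Finset.mem_insert_self _ _))).exists_mem_finset_dvd hdvd
        have := (Nat.prime_dvd_prime_iff_eq (ha j (Finset.mem_insert_self _ _))
          (ha i (Finset.mem_insert_of_mem hi))).mp hdvd2
        have := hinj j (Finset.mem_insert_self _ _) i (Finset.mem_insert_of_mem hi) this
        exact hj (this ▸ hi)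
      set tb : ZMod (a j) := ((P : ZMod (a j)))⁻¹ * (b j - (z : ZMod (a j))) with htb
      refine ⟨z + P * (tb.cast : ℤ), ?_⟩
      intro i hi
      rcases Finset.mem_insert.mp hi with rfl | hi'
      · push_cast
        rw [htb]
        field_simp
        ring
      · push_cast
        have hP0 : ((P : ℕ) : ZMod (a i)) = 0 := by
          rw [ZMod.natCast_eq_zero_iff]
          exact Finset.dvd_prod_of_mem a hi'
        rw [hP0, zero_mul, add_zero]
        exact hz i hi'

include hk

/-- KEY4: for every bound `B` there are primes `r < q` above `B` with
`orderOf (k : ZMod q) = r`. -/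
lemma prime_supply (B : ℕ) :
    ∃ r q : ℕ, r.Prime ∧ q.Prime ∧ B < r ∧ r < q ∧ ¬ q ∣ k ∧
      orderOf ((k : ZMod q)) = r := by
  obtain ⟨r, hrB, hr⟩ := Nat.exists_infinite_primes (max B k + 1)
  have hrB' : B < r := by have := le_max_left B k; omega
  have hrk : k < r := by have := le_max_right B k; omega
  have hrodd : r ≠ 2 := by omega
  have hr2 : 2 < r := by
    rcases hr.two_le.lt_or_eq with h | h
    · exact h
    · omega
  set M : ℕ := ∑ j ∈ Finset.range r, k ^ j with hM
  -- M > r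
  have hMgt : r < M := by
    have : ∑ j ∈ Finset.range r, 1 < ∑ j ∈ Finset.range r, k ^ j := by
      apply Finset.sum_lt_sum
      · intro j hj
        exact Nat.one_le_pow _ _ (by omega)
      · refine ⟨1, Finset.mem_range.mpr (by omega), ?_⟩
        simpa using (by omega : 1 < k)
    simpa using this
  have hM0 : M ≠ 0 := by omega
  -- geometric sum identity over ℤ
  have hgeom : (M : ℤ) * ((k : ℤ) - 1) = (k : ℤ) ^ r - 1 := by
    rw [hM]
    push_cast
    exact geom_sum_mul (k : ℤ) r
  -- r^2 does not divide M
  have hr2nd : ¬ (r^2 ∣ M) := by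
    intro hdvd
    have hrdvd : r ∣ M := dvd_trans (dvd_pow_self r (by omega)) hdvd
    -- k ≡ 1 mod r
    haveI : Fact r.Prime := ⟨hr⟩
    have hk1 : (k : ZMod r) = 1 := by
      have hM0' : ((M : ℕ) : ZMod r) = 0 := by
        rw [ZMod.natCast_eq_zero_iff]; exact hrdvd
      have h1 : ((k : ZMod r)) ^ r - 1 = 0 := by
        have := congrArg (fun z : ℤ => (z : ZMod r)) hgeom
        push_cast at this
        rw [hM0', zero_mul] at this
        linear_combination -this
      have h2 : (k : ZMod r) ^ r = (k : ZMod r) := ZMod.pow_card _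
      rw [h2, sub_eq_zero] at h1
      exact h1
    have hrk1 : r ∣ k - 1 := by
      have : ((k - 1 : ℕ) : ZMod r) = 0 := by
        push_cast [Nat.cast_sub (by omega : 1 ≤ k)]
        rw [hk1]; ring
      exact (ZMod.natCast_eq_zero_iff _ _).mp this
    obtain ⟨s, hs⟩ := hrk1
    have hks : k = 1 + r * s := by omega
    -- mod r^2 computation
    have hbin : ∀ j : ℕ, ((1 + r * s : ℕ) ^ j : ZMod (r^2)) = 1 + j * r * s := by
      intro j
      induction j with
      | zero => simp
      | succ j ih =>
          have hstep : ((1 + r * s : ℕ) ^ (j+1) : ZMod (r^2)) =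
              ((1 + r * s : ℕ) ^ j : ZMod (r^2)) * ((1 + r * s : ℕ) : ZMod (r^2)) := by
            push_cast; ring
          rw [hstep, ih]
          have hrr : ((r : ZMod (r^2)) * r) = 0 := by
            have h9 : (((r^2 : ℕ)) : ZMod (r^2)) = 0 := ZMod.natCast_self _
            push_cast at h9
            rw [← h9]; ring
          push_cast
          linear_combination ((j : ZMod (r^2)) * s * s) * hrr
    have hrr : ((r : ZMod (r^2)) * r) = 0 := by
      have h9 : (((r^2 : ℕ)) : ZMod (r^2)) = 0 := ZMod.natCast_self _
      push_cast at h9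
      rw [← h9]; ring
    have h1 : ∀ j : ℕ, ((k : ZMod (r^2)))^j = 1 + (j : ZMod (r^2)) * r * s := by
      intro j
      have : ((k : ℕ) : ZMod (r^2)) = ((1 + r * s : ℕ) : ZMod (r^2)) := by rw [hks]
      rw [this]
      exact hbin j
    have hMr2 : ((M : ℕ) : ZMod (r^2)) = (r : ZMod (r^2)) := by
      have hT2 : (∑ j ∈ Finset.range r, j) * 2 = r * (r - 1) := Finset.sum_range_id_mul_two r
      have hu2 : IsUnit (2 : ZMod (r^2)) := by
        have hco : Nat.Coprime 2 (r^2) :=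
          Nat.Coprime.pow_right _ ((Nat.coprime_primes Nat.prime_two hr).mpr (by omega))
        have := (ZMod.isUnit_iff_coprime 2 (r^2)).mpr hco
        simpa using this
      have hT0 : (∑ j ∈ Finset.range r, (j : ZMod (r^2))) * r * s = 0 := by
        apply hu2.mul_right_cancel
        rw [zero_mul]
        have hc := congrArg (fun z : ℕ => (z : ZMod (r^2))) hT2
        push_cast [Nat.cast_sub (by omega : 1 ≤ r)] at hc
        linear_combination ((r : ZMod (r^2)) * s) * hc +
          (((r : ZMod (r^2)) - 1) * s) * hrr
      calc ((M : ℕ) : ZMod (r^2))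
          = ∑ j ∈ Finset.range r, ((k : ZMod (r^2)))^j := by
            rw [hM]; push_cast; rfl
        _ = ∑ j ∈ Finset.range r, (1 + (j : ZMod (r^2)) * r * s) :=
            Finset.sum_congr rfl (fun j _ => h1 j)
        _ = (r : ZMod (r^2)) +
              (∑ j ∈ Finset.range r, (j : ZMod (r^2))) * r * s := by
            rw [Finset.sum_add_distrib, Finset.sum_mul, Finset.sum_mul]
            simp
        _ = (r : ZMod (r^2)) := by rw [hT0, add_zero]
    have hM00 : ((M : ℕ) : ZMod (r^2)) = 0 := by
      rw [ZMod.natCast_eq_zero_iff]; exact hdvd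
    rw [hM00] at hMr2
    have : r^2 ∣ r := (ZMod.natCast_eq_zero_iff _ _).mp hMr2.symm
    have := Nat.le_of_dvd (by omega) this
    nlinarith
  -- now find a prime q ∣ M with q ≠ r
  have hexq : ∃ q : ℕ, q.Prime ∧ q ∣ M ∧ q ≠ r := by
    by_contra hcon
    push_neg at hcon
    have hall : ∀ {d : ℕ}, d.Prime → d ∣ M → d = r := fun hd hdm => hcon _ hd hdm
    have heq := Nat.eq_prime_pow_of_unique_prime_dvd hM0 hall
    set eexp := M.primeFactorsList.length with hee
    have h2 : 2 ≤ eexp := by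
      by_contra hlt
      push_neg at hlt
      have : eexp = 0 ∨ eexp = 1 := by omega
      rcases this with h | h <;> rw [h] at heq <;> simp at heq <;> omega
    exact hr2nd (heq ▸ pow_dvd_pow r h2)
  obtain ⟨q, hq, hqM, hqr⟩ := hexq
  haveI : Fact q.Prime := ⟨hq⟩
  have hMq : ((M : ℕ) : ZMod q) = 0 := (ZMod.natCast_eq_zero_iff _ _).mpr hqM
  have hκr : ((k : ZMod q)) ^ r = 1 := by
    have hc := congrArg (fun z : ℤ => (z : ZMod q)) hgeom
    push_cast at hc
    rw [hMq, zero_mul] at hc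
    linear_combination -hc
  have hκ0 : (k : ZMod q) ≠ 0 := by
    intro h0
    rw [h0, zero_pow (by omega : r ≠ 0)] at hκr
    exact zero_ne_one hκr
  have hqk : ¬ q ∣ k := fun hd => hκ0 ((ZMod.natCast_eq_zero_iff _ _).mpr hd)
  have hord_dvd : orderOf ((k : ZMod q)) ∣ r := orderOf_dvd_of_pow_eq_one hκr
  have hordr : orderOf ((k : ZMod q)) = r := by
    rcases Nat.Prime.eq_one_or_self_of_dvd hr _ hord_dvd with h1 | h1
    · exfalso
      have hk1 : (k : ZMod q) = 1 := orderOf_eq_one_iff.mp h1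
      have hMr : ((M : ℕ) : ZMod q) = (r : ZMod q) := by
        rw [hM, Nat.cast_sum]
        calc ∑ j ∈ Finset.range r, ((k^j : ℕ) : ZMod q)
            = ∑ j ∈ Finset.range r, (1 : ZMod q) := by
              apply Finset.sum_congr rfl
              intro j _
              push_cast
              rw [hk1, one_pow]
          _ = (r : ZMod q) := by simp
      rw [hMq] at hMr
      have hqr2 : q ∣ r := (ZMod.natCast_eq_zero_iff _ _).mp hMr.symm
      exact hqr ((Nat.prime_dvd_prime_iff_eq hq hr).mp hqr2)
    · exact h1
  have hrq : r < q := by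
    have hκu : IsUnit ((k : ℕ) : ZMod q) := isUnit_iff_ne_zero.mpr hκ0
    have h1 : orderOf hκu.unit ∣ Fintype.card (ZMod q)ˣ := orderOf_dvd_card
    rw [ZMod.card_units] at h1
    have h2 : orderOf ((k : ZMod q)) = orderOf hκu.unit := by
      rw [← orderOf_units, hκu.unit_spec]
    rw [← h2, hordr] at h1
    have := Nat.le_of_dvd (by have := hq.two_le; omega) h1
    omega
  exact ⟨r, q, hr, hq, hrB', hrq, hqk, hordr⟩

/-- Good pair of primes for bound `B`. -/
def Good (B r q : ℕ) : Prop :=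
  r.Prime ∧ q.Prime ∧ B < r ∧ r < q ∧ ¬ q ∣ k ∧ orderOf ((k : ZMod q)) = r

lemma good_mono {B B' r q : ℕ} (h : B' ≤ B) (hg : Good k B r q) : Good k B' r q :=
  ⟨hg.1, hg.2.1, lt_of_le_of_lt h hg.2.2.1, hg.2.2.2⟩

lemma prime_supply' (B : ℕ) : ∃ pr : ℕ × ℕ, Good k B pr.1 pr.2 := by
  obtain ⟨r, q, h1, h2, h3, h4, h5, h6⟩ := prime_supply k hk B
  exact ⟨(r, q), h1, h2, h3, h4, h5, h6⟩

/-- A sequence of good prime pairs with strictly increasing entries. -/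
noncomputable def rqSeq (B : ℕ) : ℕ → ℕ × ℕ
  | 0 => Classical.choose (prime_supply' k hk B)
  | (j+1) => Classical.choose (prime_supply' k hk (max B (rqSeq B j).2))

lemma rqSeq_good (B j : ℕ) : Good k B (rqSeq k hk B j).1 (rqSeq k hk B j).2 := by
  cases j with
  | zero => exact Classical.choose_spec (prime_supply' k hk B)
  | succ j =>
      exact good_mono k hk (le_max_left _ _)
        (Classical.choose_spec (prime_supply' k hk (max B (rqSeq k hk B j).2)))

lemma rqSeq_chain (B j : ℕ) : (rqSeq k hk B j).2 < (rqSeq k hk B (j+1)).1 := by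
  have := Classical.choose_spec (prime_supply' k hk (max B (rqSeq k hk B j).2))
  have h2 := this.2.2.1
  have := le_max_right B (rqSeq k hk B j).2
  calc (rqSeq k hk B j).2 ≤ max B (rqSeq k hk B j).2 := le_max_right _ _
    _ < (rqSeq k hk B (j+1)).1 := h2

lemma rqSeq_lt (B : ℕ) {j j' : ℕ} (h : j < j') :
    (rqSeq k hk B j).2 < (rqSeq k hk B j').1 := by
  induction j' with
  | zero => omega
  | succ j' ih =>
      rcases Nat.lt_succ_iff_lt_or_eq.mp h with h' | h'
      · calc (rqSeq k hk B j).2 < (rqSeq k hk B j').1 := ih h'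
          _ ≤ (rqSeq k hk B j').2 := le_of_lt (rqSeq_good k hk B j').2.2.2.1
          _ < (rqSeq k hk B (j'+1)).1 := rqSeq_chain k hk B j'
      · subst h'
        exact rqSeq_chain k hk B j

lemma rqSeq_r_inj (B : ℕ) {j j' : ℕ} (h : (rqSeq k hk B j).1 = (rqSeq k hk B j').1) :
    j = j' := by
  by_contra hne
  rcases Nat.lt_or_ge j j' with h' | h'
  · have h1 := rqSeq_lt k hk B h'
    have h2 := (rqSeq_good k hk B j).2.2.2.1
    omega
  · have h'' : j' < j := by omega
    have h1 := rqSeq_lt k hk B h''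
    have h2 := (rqSeq_good k hk B j').2.2.2.1
    omega

lemma rqSeq_q_inj (B : ℕ) {j j' : ℕ} (h : (rqSeq k hk B j).2 = (rqSeq k hk B j').2) :
    j = j' := by
  by_contra hne
  rcases Nat.lt_or_ge j j' with h' | h'
  · have h1 := rqSeq_lt k hk B h'
    have h2 := (rqSeq_good k hk B j').2.2.2.1
    omega
  · have h'' : j' < j := by omega
    have h1 := rqSeq_lt k hk B h''
    have h2 := (rqSeq_good k hk B j).2.2.2.1
    omega

end BSproof

open BSproof in
/-- Let `k ≥ 2` and `G = BS(1,k) = ℤ[1/k] ⋊_φ ℤ`.  For every finite subset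
`A` of `G` there is `g ∈ G` such that the elements of `g·A` lie in pairwise distinct conjugacy
classes; that is, `c(g·A) = |A|`. -/
theorem bs_translate_finite_set_distinct_classes (k : ℕ) (hk : 2 ≤ k)
    (A : Set ↥(BS k hk)) (hA : A.Finite) :
    ∃ g : ↥(BS k hk),
      (ConjClasses.mk '' ((fun x => g * x) '' A)).ncard = A.ncard := by
  classical
  have hkpos : 0 < k := by omega
  have hk0 : (k : ℚ) ≠ 0 := by exact_mod_cast hkpos.ne'
  set S : Finset ↥(BS k hk) := hA.toFinset with hSdef
  choose num den hnum using fun (a : ↥(BS k hk)) => zOneOver_exists hk (bsX_mem k hk a)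
  set i : ℕ := S.sup den with hidef
  set cc : ↥(BS k hk) → ℤ := fun a => num a * k ^ (i - den a) with hccdef
  have hcc : ∀ a ∈ S, bsX k hk a * (k:ℚ)^i = (cc a : ℚ) := by
    intro a ha
    have hle : den a ≤ i := Finset.le_sup ha
    rw [hnum a, hccdef]
    push_cast
    rw [show i = den a + (i - den a) from (Nat.add_sub_cancel' hle).symm, pow_add, Nat.add_sub_cancel_left]
    field_simp
  have hccinj : ∀ a ∈ S, ∀ b ∈ S, bsN k hk a = bsN k hk b → cc a = cc b → a = b := by
    intro a ha b hb hN hc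
    apply bs_ext k hk
    · have hki : ((k:ℚ))^i ≠ 0 := pow_ne_zero _ hk0
      have h1 : bsX k hk a * (k:ℚ)^i = bsX k hk b * (k:ℚ)^i := by
        rw [hcc a ha, hcc b hb, hc]
      exact mul_right_cancel₀ hki h1
    · exact hN
  set P : Finset (↥(BS k hk) × ↥(BS k hk)) :=
    (S ×ˢ S).filter (fun pr => pr.1 ≠ pr.2 ∧ bsN k hk pr.1 = bsN k hk pr.2) with hPdef
  set B : ℕ := (P.sup fun pr => (cc pr.1 - cc pr.2).natAbs) + k with hBdef
  set idx : {pr // pr ∈ P} → ℕ := fun t => (P.equivFin t : ℕ) with hidx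
  have hidxinj : Function.Injective idx := by
    intro t t' h
    exact P.equivFin.injective (Fin.ext h)
  set rr : {pr // pr ∈ P} → ℕ := fun t => (rqSeq k hk B (idx t)).1 with hrrdef
  set qq : {pr // pr ∈ P} → ℕ := fun t => (rqSeq k hk B (idx t)).2 with hqqdef
  have hgood : ∀ t, Good k B (rr t) (qq t) := fun t => rqSeq_good k hk B (idx t)
  -- CRT for p
  have hrinj : ∀ t ∈ Finset.univ, ∀ t' ∈ (Finset.univ : Finset {pr // pr ∈ P}),
      rr t = rr t' → t = t' := by
    intro t _ t' _ h
    exact hidxinj (rqSeq_r_inj k hk B h)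
  obtain ⟨z₀, hz₀⟩ := crt_primes Finset.univ rr (fun t _ => (hgood t).1) hrinj
      (fun t => ((-(bsN k hk t.val.1) : ℤ) : ZMod (rr t)))
  set R : ℕ := ∏ t, rr t with hRdef
  have hRpos : 0 < R := Finset.prod_pos (fun t _ => (hgood t).1.pos)
  have hRz : (R : ℤ) ≠ 0 := by exact_mod_cast hRpos.ne'
  set maxN : ℕ := S.sup (fun a => (bsN k hk a).natAbs) with hmaxN
  have hmodnn : 0 ≤ z₀ % (R:ℤ) := Int.emod_nonneg z₀ hRz
  set p : ℕ := (z₀ % (R:ℤ)).toNat + R * (maxN + 1) with hpdef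
  have hpz : (p : ℤ) = z₀ % (R:ℤ) + (R:ℤ) * (maxN + 1) := by
    rw [hpdef]
    push_cast [Int.toNat_of_nonneg hmodnn]
    ring
  have hpN : ∀ a ∈ S, 0 < (p:ℤ) + bsN k hk a := by
    intro a ha
    have h1 : (bsN k hk a).natAbs ≤ maxN :=
      Finset.le_sup (f := fun a => (bsN k hk a).natAbs) ha
    have h2 : (maxN:ℤ) + 1 ≤ (R:ℤ) * (maxN+1) := by
      have : (1:ℤ) ≤ R := by exact_mod_cast hRpos
      nlinarith
    omega
  have hpr : ∀ t : {pr // pr ∈ P},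
      (((p:ℤ) + bsN k hk t.val.1 : ℤ) : ZMod (rr t)) = 0 := by
    intro t
    have hRdvd : ((R:ℕ) : ZMod (rr t)) = 0 :=
      (ZMod.natCast_eq_zero_iff _ _).mpr (Finset.dvd_prod_of_mem _ (Finset.mem_univ t))
    have hmod : ((z₀ % (R:ℤ) : ℤ) : ZMod (rr t)) = ((z₀ : ℤ) : ZMod (rr t)) := by
      rw [Int.emod_def]
      push_cast
      rw [hRdvd]
      ring
    have h1 : (((p:ℤ)) : ZMod (rr t)) = ((z₀ : ℤ) : ZMod (rr t)) := by
      rw [hpz]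
      push_cast
      rw [hRdvd]
      push_cast at hmod
      rw [hmod]
      ring
    push_cast
    push_cast at h1
    rw [h1, hz₀ t (Finset.mem_univ t)]
    push_cast
    ring
  -- residues for z
  have hzbex : ∀ t : {pr // pr ∈ P}, ∃ zb : ZMod (qq t), ∀ m' : ℕ,
      m' < orderOf ((k : ZMod (qq t))) →
      zb * ((k : ZMod (qq t)))^i + (cc t.val.2 : ZMod (qq t)) * ((k : ZMod (qq t)))^p ≠
      ((k : ZMod (qq t)))^m' *
        (zb * ((k : ZMod (qq t)))^i + (cc t.val.1 : ZMod (qq t)) * ((k : ZMod (qq t)))^p) := by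
    intro t
    obtain ⟨hrp, hqp, hBr, hrq, hqk, hord⟩ := hgood t
    haveI : Fact (qq t).Prime := ⟨hqp⟩
    have hκ0 : ((k:ℕ) : ZMod (qq t)) ≠ 0 := by
      rw [Ne, ZMod.natCast_eq_zero_iff]; exact hqk
    obtain ⟨hmemP, hne, hNe⟩ := Finset.mem_filter.mp t.property
    obtain ⟨h1S, h2S⟩ := Finset.mem_product.mp hmemP
    have hccne : cc t.val.1 ≠ cc t.val.2 := by
      intro h
      exact hne (hccinj _ h1S _ h2S hNe h)
    have hcast : ((cc t.val.1 - cc t.val.2 : ℤ) : ZMod (qq t)) ≠ 0 := by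
      rw [Ne, ZMod.intCast_zmod_eq_zero_iff_dvd]
      intro hdvd
      have habs : ((qq t):ℤ) ≤ |cc t.val.1 - cc t.val.2| :=
        Int.le_of_dvd (abs_pos.mpr (sub_ne_zero.mpr hccne)) ((dvd_abs _ _).mpr hdvd)
      have hsup : (cc t.val.1 - cc t.val.2).natAbs ≤
          (P.sup fun pr => (cc pr.1 - cc pr.2).natAbs) :=
        Finset.le_sup (f := fun pr => (cc pr.1 - cc pr.2).natAbs) t.property
      have habs2 : |cc t.val.1 - cc t.val.2| = ((cc t.val.1 - cc t.val.2).natAbs : ℤ) :=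
        Int.abs_eq_natAbs _
      omega
    have hαβ : (cc t.val.1 : ZMod (qq t)) * ((k : ZMod (qq t)))^p ≠
        (cc t.val.2 : ZMod (qq t)) * ((k : ZMod (qq t)))^p := by
      intro h
      apply hcast
      have h2 := mul_right_cancel₀ (pow_ne_zero p hκ0) h
      push_cast
      linear_combination h2
    obtain ⟨zb, hzb⟩ := good_residue (qq t) hqp ((k : ZMod (qq t))) (hord ▸ hrq)
      (((k : ZMod (qq t)))^i) ((cc t.val.1 : ZMod (qq t)) * ((k : ZMod (qq t)))^p)
      ((cc t.val.2 : ZMod (qq t)) * ((k : ZMod (qq t)))^p)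
      (pow_ne_zero i hκ0) hαβ
    exact ⟨zb, hzb⟩
  choose zb hzbspec using hzbex
  have hqinj : ∀ t ∈ Finset.univ, ∀ t' ∈ (Finset.univ : Finset {pr // pr ∈ P}),
      qq t = qq t' → t = t' := by
    intro t _ t' _ h
    exact hidxinj (rqSeq_q_inj k hk B h)
  obtain ⟨z, hz⟩ := crt_primes Finset.univ qq (fun t _ => (hgood t).2.1) hqinj zb
  set g : ↥(BS k hk) := bsElem k hk (z : ℚ) (intCast_mem_zOneOver k z) (p : ℤ) with hgdef
  have key : ∀ a ∈ A, ∀ b ∈ A, ConjClasses.mk (g * a) = ConjClasses.mk (g * b) → a = b := by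
    intro a haA b hbA hmk
    by_contra hab
    have haS : a ∈ S := hA.mem_toFinset.mpr haA
    have hbS : b ∈ S := hA.mem_toFinset.mpr hbA
    have hconj : IsConj (g*a) (g*b) := ConjClasses.mk_eq_mk_iff_isConj.mp hmk
    obtain ⟨hNeq, m, y, hy, heq⟩ := conj_data k hk hconj
    have hNga : bsN k hk (g*a) = (p:ℤ) + bsN k hk a := by
      rw [bsN_mul]
      rfl
    have hNgb : bsN k hk (g*b) = (p:ℤ) + bsN k hk b := by
      rw [bsN_mul]
      rfl
    have hNab : bsN k hk a = bsN k hk b := by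
      rw [hNga, hNgb] at hNeq
      omega
    have hPmem : (a,b) ∈ P :=
      Finset.mem_filter.mpr ⟨Finset.mem_product.mpr ⟨haS, hbS⟩, hab, hNab⟩
    set t : {pr // pr ∈ P} := ⟨(a,b), hPmem⟩ with htdef
    obtain ⟨hrp, hqp, hBr, hrq, hqk, hord⟩ := hgood t
    haveI : Fact (qq t).Prime := ⟨hqp⟩
    have hppos : 0 < (p:ℤ) + bsN k hk a := hpN a haS
    set Nt : ℕ := ((p:ℤ) + bsN k hk a).toNat with hNtdef
    have hNt' : (Nt:ℤ) = (p:ℤ) + bsN k hk a := Int.toNat_of_nonneg hppos.le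
    have hr2 : ((rr t):ℤ) ∣ ((p:ℤ) + bsN k hk a) :=
      (ZMod.intCast_zmod_eq_zero_iff_dvd _ _).mp (hpr t)
    have hr3 : (rr t) ∣ Nt := by
      have : ((rr t):ℤ) ∣ (Nt:ℤ) := hNt' ▸ hr2
      exact_mod_cast this
    have hκNt : ((k : ZMod (qq t)))^Nt = 1 := orderOf_dvd_iff_pow_eq_one.mp (hord ▸ hr3)
    have hq1 : (((k:ℤ)^Nt - 1 : ℤ) : ZMod (qq t)) = 0 := by
      push_cast
      rw [hκNt]
      ring
    obtain ⟨dd, hdd⟩ := (ZMod.intCast_zmod_eq_zero_iff_dvd _ _).mp hq1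
    have hXga : bsX k hk (g*a) = (z:ℚ) + (k:ℚ)^(p:ℕ) * bsX k hk a := by
      rw [bsX_mul]
      have h1 : bsX k hk g = (z:ℚ) := rfl
      have h2 : bsN k hk g = (p:ℤ) := rfl
      rw [h1, h2, zpow_natCast]
    have hXgb : bsX k hk (g*b) = (z:ℚ) + (k:ℚ)^(p:ℕ) * bsX k hk b := by
      rw [bsX_mul]
      have h1 : bsX k hk g = (z:ℚ) := rfl
      have h2 : bsN k hk g = (p:ℤ) := rfl
      rw [h1, h2, zpow_natCast]
    have e3 : (1 - (k:ℚ)^(bsN k hk (g*a))) = (qq t : ℚ) * (-(dd:ℚ)) := by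
      rw [hNga, show ((p:ℤ) + bsN k hk a) = (Nt:ℤ) from hNt'.symm, zpow_natCast]
      have hddq : ((k:ℚ)^Nt - 1 : ℚ) = (qq t : ℚ) * (dd:ℚ) := by
        exact_mod_cast congrArg (fun w : ℤ => (w:ℚ)) hdd
      linear_combination -hddq
    have hmain : ((z * k^i + cc b * k^p : ℤ) : ℚ) =
        (k:ℚ)^m * ((z * k^i + cc a * k^p : ℤ) : ℚ) +
          (qq t : ℚ) * ((k:ℚ)^i * ((-(dd:ℚ)) * y)) := by
      have e1 : bsX k hk (g*b) * (k:ℚ)^i = ((z * k^i + cc b * k^p : ℤ) : ℚ) := by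
        rw [hXgb]
        push_cast
        linear_combination ((k:ℚ)^p) * (hcc b hbS)
      have e2 : bsX k hk (g*a) * (k:ℚ)^i = ((z * k^i + cc a * k^p : ℤ) : ℚ) := by
        rw [hXga]
        push_cast
        linear_combination ((k:ℚ)^p) * (hcc a haS)
      calc ((z * k^i + cc b * k^p : ℤ) : ℚ) = bsX k hk (g*b) * (k:ℚ)^i := e1.symm
        _ = ((k:ℚ)^m * bsX k hk (g*a) + (1 - (k:ℚ)^(bsN k hk (g*a))) * y) * (k:ℚ)^i := by
            rw [heq]
        _ = (k:ℚ)^m * (bsX k hk (g*a) * (k:ℚ)^i) +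
              (qq t : ℚ) * ((k:ℚ)^i * ((-(dd:ℚ)) * y)) := by
            rw [e3]; ring
        _ = (k:ℚ)^m * ((z * k^i + cc a * k^p : ℤ) : ℚ) +
              (qq t : ℚ) * ((k:ℚ)^i * ((-(dd:ℚ)) * y)) := by
            rw [e2]
    have hy3 : (k:ℚ)^i * ((-(dd:ℚ)) * y) ∈ zOneOver k := by
      have h1 : ((-(dd:ℚ))) * y ∈ zOneOver k := by
        have := AddSubgroup.zsmul_mem (zOneOver k) hy (-dd)
        simpa [zsmul_eq_mul] using this
      have h2 := zOneOver_smul k hk (i:ℤ) h1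
      rwa [zpow_natCast] at h2
    obtain ⟨m'', hm''lt, hm''⟩ := reduce_mod k hk (qq t) hqp hqk _ _ m _ hy3 hmain
    apply hzbspec t m'' hm''lt
    have hu : ((z * k^i + cc b * k^p : ℤ) : ZMod (qq t)) =
        zb t * ((k : ZMod (qq t)))^i + (cc b : ZMod (qq t)) * ((k : ZMod (qq t)))^p := by
      push_cast
      rw [hz t (Finset.mem_univ t)]
      try ring
    have hv : ((z * k^i + cc a * k^p : ℤ) : ZMod (qq t)) =
        zb t * ((k : ZMod (qq t)))^i + (cc a : ZMod (qq t)) * ((k : ZMod (qq t)))^p := by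
      push_cast
      rw [hz t (Finset.mem_univ t)]
      try ring
    rw [← hu, ← hv]
    exact hm''
  have hinj : Set.InjOn ConjClasses.mk ((fun x => g * x) '' A) := by
    rintro u ⟨a, haA, rfl⟩ v ⟨b, hbA, rfl⟩ huv
    rw [key a haA b hbA huv]
  exact ⟨g, by
    rw [Set.ncard_image_of_injOn hinj, Set.ncard_image_of_injective A (mul_right_injective g)]⟩
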